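/- Let k01, k10 : ℝ → ℝ be nonnegative continuously differentiable functions, A = −(k01 + k10), let 𝒟 = [a,b] be compact with A(v) ≤ −ν < 0 on 𝒟, and set g₀ = max_{v ∈ 𝒟} k01(v), g₂ = max_{v ∈ 𝒟} |A'(v)|. Let w : (−∞,0] → (0,1] be measurable with ∫_{−∞}^0 e^{ν s}/w_s ds < ∞. Then for any measurable V, V' : (−∞,0] → 𝒟, the quantity H₁(V,V') = ∫_{−∞}^0 | exp(∫_τ^0 A(V_s) ds) − exp(∫_τ^0 A(V'_s) ds) | · k01(V_τ) dτ satisfies H₁(V,V') ≤ (g₀ g₂ / ν) · ( ∫_{−∞}^0 e^{ν s}/w_s ds ) · ‖V − V'‖_w. -/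

import Mathlib

open MeasureTheory

lemma abs_exp_sub_exp_le' {x y c : ℝ} (hx : x ≤ c) (hy : y ≤ c) :
    |Real.exp x - Real.exp y| ≤ Real.exp c * |x - y| := by
  wlog h : y ≤ x generalizing x y
  · rw [abs_sub_comm, abs_sub_comm x y]; exact this hy hx (le_of_not_ge h)
  rw [abs_of_nonneg (sub_nonneg.2 (Real.exp_le_exp.2 h)), abs_of_nonneg (sub_nonneg.2 h)]
  have h1 := Real.add_one_le_exp (y - x)
  have h4 : (y - x + 1) * Real.exp x ≤ Real.exp y := by
    have := mul_le_mul_of_nonneg_right h1 (Real.exp_pos x).le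
    rwa [Real.exp_sub, div_mul_cancel₀ _ (Real.exp_pos x).ne'] at this
  have h3 : Real.exp x ≤ Real.exp c := Real.exp_le_exp.2 hx
  nlinarith [mul_nonneg (sub_nonneg.2 h) (sub_nonneg.2 h3)]

lemma hasDerivAt_exp_mul_div (ν : ℝ) (hν : ν ≠ 0) (x : ℝ) :
    HasDerivAt (fun y => Real.exp (ν * y) / ν) (Real.exp (ν * x)) x := by
  have h1 : HasDerivAt (fun y : ℝ => ν * y) ν x := by
    simpa using (hasDerivAt_id x).const_mul ν
  have h2 := ((Real.hasDerivAt_exp (ν * x)).comp x h1).div_const ν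
  simpa [mul_div_assoc, mul_div_cancel_right₀, hν] using h2

lemma exp_mul_integrableOn_Iic {ν : ℝ} (hν : 0 < ν) (c : ℝ) :
    IntegrableOn (fun τ => Real.exp (ν * τ)) (Set.Iic c) := by
  have hcont : Continuous fun τ => Real.exp (ν * τ) :=
    Real.continuous_exp.comp (continuous_const.mul continuous_id)
  have hiv : ∀ i : ℝ, ∫ x in i..c, ‖Real.exp (ν * x)‖ = Real.exp (ν * c) / ν - Real.exp (ν * i) / ν := by
    intro i
    have : ∀ x : ℝ, ‖Real.exp (ν * x)‖ = Real.exp (ν * x) := fun x =>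
      Real.norm_eq_abs _ ▸ abs_of_pos (Real.exp_pos _)
    simp_rw [this]
    exact intervalIntegral.integral_eq_sub_of_hasDerivAt
      (fun x _ => hasDerivAt_exp_mul_div ν hν.ne' x) (hcont.intervalIntegrable i c)
  apply integrableOn_Iic_of_intervalIntegral_norm_tendsto (Real.exp (ν * c) / ν) c
    (fun i : ℝ => hcont.integrableOn_Ioc) Filter.tendsto_id
  simp_rw [hiv]
  have h2 : Filter.Tendsto (fun i : ℝ => Real.exp (ν * i) / ν) Filter.atBot (nhds 0) := by
    have hb : Filter.Tendsto (fun i : ℝ => ν * i) Filter.atBot Filter.atBot :=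
      Filter.tendsto_id.const_mul_atBot hν
    simpa using (Real.tendsto_exp_atBot.comp hb).div_const ν
  simpa using (tendsto_const_nhds.sub h2)

lemma integral_exp_mul_Iic' {ν : ℝ} (hν : 0 < ν) (c : ℝ) :
    ∫ τ in Set.Iic c, Real.exp (ν * τ) = Real.exp (ν * c) / ν := by
  have hcont : Continuous fun τ => Real.exp (ν * τ) :=
    Real.continuous_exp.comp (continuous_const.mul continuous_id)
  refine tendsto_nhds_unique
    (intervalIntegral_tendsto_integral_Iic c (exp_mul_integrableOn_Iic hν c) Filter.tendsto_id) ?_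
  have hiv : ∀ i : ℝ, ∫ x in i..c, Real.exp (ν * x) = Real.exp (ν * c) / ν - Real.exp (ν * i) / ν :=
    fun i => intervalIntegral.integral_eq_sub_of_hasDerivAt
      (fun x _ => hasDerivAt_exp_mul_div ν hν.ne' x) (hcont.intervalIntegrable i c)
  simp_rw [hiv]
  have h2 : Filter.Tendsto (fun i : ℝ => Real.exp (ν * i) / ν) Filter.atBot (nhds 0) := by
    have hb : Filter.Tendsto (fun i : ℝ => ν * i) Filter.atBot Filter.atBot :=
      Filter.tendsto_id.const_mul_atBot hν
    simpa using (Real.tendsto_exp_atBot.comp hb).div_const ν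
  simpa using (tendsto_const_nhds.sub h2)


/-- bound on the term `H₁` in the proof of Theorem 1: with
`A = −(k01 + k10)`, inputs valued in `𝒟 = [a,b]` where `A ≤ −ν < 0`,
`g₀ = max_𝒟 k01`, `g₂ = max_𝒟 |A'|`, and a weighting function
`w : (−∞,0] → (0,1]` with `∫_{−∞}^0 e^{νs}/w_s ds < ∞`, one has
`H₁(V,V') ≤ (g₀ g₂ / ν)·(∫_{−∞}^0 e^{νs}/w_s ds)·‖V − V'‖_w`. -/
theorem dms_H1_bound
    (k01 k10 A : ℝ → ℝ)
    (hk01 : ContDiff ℝ 1 k01) (hk10 : ContDiff ℝ 1 k10)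
    (hk01n : ∀ v, 0 ≤ k01 v) (hk10n : ∀ v, 0 ≤ k10 v)
    (hA : ∀ v, A v = -(k01 v + k10 v))
    (a b ν : ℝ) (hab : a ≤ b) (hν : 0 < ν)
    (hAν : ∀ v ∈ Set.Icc a b, A v ≤ -ν)
    (g₀ g₂ : ℝ)
    (hg₀ : IsGreatest (k01 '' Set.Icc a b) g₀)
    (hg₂ : IsGreatest ((fun v => |deriv A v|) '' Set.Icc a b) g₂)
    (w : ℝ → ℝ) (hwm : Measurable w)
    (hw : ∀ t ≤ (0 : ℝ), 0 < w t ∧ w t ≤ 1)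
    (hwint : IntegrableOn (fun s => Real.exp (ν * s) / w s) (Set.Iic 0))
    (V V' : ℝ → ℝ) (hVm : Measurable V) (hV'm : Measurable V')
    (hV : ∀ t ≤ (0 : ℝ), V t ∈ Set.Icc a b)
    (hV' : ∀ t ≤ (0 : ℝ), V' t ∈ Set.Icc a b) :
    (∫ τ in Set.Iic (0 : ℝ),
        |Real.exp (∫ s in τ..0, A (V s)) - Real.exp (∫ s in τ..0, A (V' s))| *
          k01 (V τ)) ≤
      (g₀ * g₂ / ν) * (∫ s in Set.Iic (0 : ℝ), Real.exp (ν * s) / w s) *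
        essSup (fun t => w t * |V t - V' t|) (volume.restrict (Set.Iic (0 : ℝ))) := by
  classical
  have hAe : A = fun v => -(k01 v + k10 v) := funext hA
  have hAc : Continuous A := by
    rw [hAe]; exact ((hk01.continuous).add (hk10.continuous)).neg
  have hAd : ∀ x : ℝ, DifferentiableAt ℝ A x := by
    intro x
    have : ContDiff ℝ 1 A := by rw [hAe]; exact (hk01.add hk10).neg
    exact (this.differentiable one_ne_zero).differentiableAt
  set ρ : Measure ℝ := volume.restrict (Set.Iic (0 : ℝ)) with hρ
  set M : ℝ := essSup (fun t => w t * |V t - V' t|) ρ with hMdef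
  set I : ℝ := ∫ s in Set.Iic (0 : ℝ), Real.exp (ν * s) / w s with hIdef
  -- bounds from IsGreatest
  have hg₀b : ∀ v ∈ Set.Icc a b, k01 v ≤ g₀ := fun v hv => hg₀.2 (Set.mem_image_of_mem _ hv)
  have hg₂b : ∀ v ∈ Set.Icc a b, |deriv A v| ≤ g₂ := fun v hv => hg₂.2 (Set.mem_image_of_mem _ hv)
  have hg₀n : 0 ≤ g₀ := by obtain ⟨v, _, hv⟩ := hg₀.1; exact hv ▸ hk01n v
  have hg₂n : 0 ≤ g₂ := by obtain ⟨v, _, hv⟩ := hg₂.1; exact hv ▸ abs_nonneg _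
  -- Lipschitz bound for A on [a,b]
  have hALip : ∀ u v : ℝ, u ∈ Set.Icc a b → v ∈ Set.Icc a b → |A u - A v| ≤ g₂ * |u - v| := by
    intro u v hu hv
    have := (convex_Icc a b).norm_image_sub_le_of_norm_deriv_le (fun x _ => hAd x)
      (fun x hx => by simpa [Real.norm_eq_abs] using hg₂b x hx) hv hu
    simpa [Real.norm_eq_abs] using this
  -- essSup facts
  have hbdd : Filter.IsBoundedUnder (· ≤ ·) (ae ρ) (fun t => w t * |V t - V' t|) := by
    refine ⟨b - a, Filter.eventually_map.2 ?_⟩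
    filter_upwards [ae_restrict_mem measurableSet_Iic] with t ht
    obtain ⟨hw1, hw2⟩ := hw t ht
    obtain ⟨h2a, h2b⟩ := hV t ht
    obtain ⟨h3a, h3b⟩ := hV' t ht
    have habs : |V t - V' t| ≤ b - a := abs_sub_le_iff.2 ⟨by linarith, by linarith⟩
    nlinarith [abs_nonneg (V t - V' t)]
  have hMae : ∀ᵐ t ∂ρ, w t * |V t - V' t| ≤ M := ae_le_essSup hbdd
  have hρne : ρ ≠ 0 := by
    intro h0
    have h1 : ρ (Set.Iic (0 : ℝ)) = 0 := by rw [h0]; rfl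
    rw [hρ, Measure.restrict_apply measurableSet_Iic, Set.inter_self, Real.volume_Iic] at h1
    exact ENNReal.top_ne_zero h1
  have hMn : 0 ≤ M := by
    have : (ae ρ).NeBot := ae_neBot.2 hρne
    obtain ⟨t, ht1, ht2⟩ := (hMae.and (ae_restrict_mem measurableSet_Iic)).exists
    have := (hw t ht2).1
    nlinarith [abs_nonneg (V t - V' t)]
  -- a.e. pointwise bound |V - V'| ≤ M / w
  have hVb : ∀ᵐ s : ℝ, s ∈ Set.Iic (0 : ℝ) → |V s - V' s| ≤ M / w s := by
    have := (ae_restrict_iff' measurableSet_Iic).1 hMae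
    filter_upwards [this] with s hs hs0
    have hws := (hw s hs0).1
    rw [le_div_iff₀ hws]
    calc |V s - V' s| * w s = w s * |V s - V' s| := by ring
    _ ≤ M := hs hs0

  -- uniform bound on A over [a,b]
  obtain ⟨C₀, hC₀⟩ := isCompact_Icc.exists_bound_of_continuousOn (s := Set.Icc a b)
    hAc.continuousOn
  -- interval integrability of A ∘ U for admissible U
  have hIntAV : ∀ (U : ℝ → ℝ), Measurable U → (∀ t ≤ (0:ℝ), U t ∈ Set.Icc a b) →
      ∀ τ : ℝ, τ ≤ 0 → IntervalIntegrable (fun s => A (U s)) volume τ 0 := by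
    intro U hUm hU τ hτ
    rw [intervalIntegrable_iff_integrableOn_Ioc_of_le hτ]
    refine Integrable.mono' (g := fun _ => C₀) ?_ ?_ ?_
    · exact integrableOn_const measure_Ioc_lt_top.ne
    · exact (hAc.measurable.comp hUm).aestronglyMeasurable
    · filter_upwards [ae_restrict_mem measurableSet_Ioc] with s hs
      exact hC₀ _ (hU s hs.2)
  -- integrability of the comparison integrand on Ioc τ 0
  have hinv : ∀ τ : ℝ, τ ≤ 0 → IntegrableOn (fun s => g₂ * (M / w s)) (Set.Ioc τ 0) := by
    intro τ hτ
    have hsub : Set.Ioc τ 0 ⊆ Set.Iic (0:ℝ) := fun x hx => hx.2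
    have hbase : IntegrableOn (fun s => Real.exp (ν * s) / w s) (Set.Ioc τ 0) :=
      hwint.mono_set hsub
    refine Integrable.mono' (hbase.const_mul (g₂ * M * Real.exp (-(ν * τ)))) ?_ ?_
    · exact ((measurable_const.div hwm).const_mul _).aestronglyMeasurable
    · filter_upwards [ae_restrict_mem measurableSet_Ioc] with s hs
      have hws := (hw s hs.2).1
      have h2 : (1:ℝ) ≤ Real.exp (-(ν * τ)) * Real.exp (ν * s) := by
        rw [← Real.exp_add]
        apply Real.one_le_exp
        nlinarith [hs.1.le]
      have h3 : 0 ≤ g₂ * M * (w s)⁻¹ :=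
        mul_nonneg (mul_nonneg hg₂n hMn) (inv_nonneg.2 hws.le)
      rw [Real.norm_eq_abs,
        abs_of_nonneg (mul_nonneg hg₂n (div_nonneg hMn hws.le))]
      simp only [div_eq_mul_inv]
      nlinarith [h2, h3]
  -- the Fubini kernel
  set f : ℝ → ℝ → ℝ := fun τ s => if τ < s then Real.exp (ν * τ) / w s else 0 with hfdef
  set G : ℝ → ℝ := fun τ => ∫ s, f τ s ∂ρ with hGdef
  have hGval : ∀ τ : ℝ, τ ≤ 0 → G τ = Real.exp (ν * τ) * ∫ s in Set.Ioc τ 0, (w s)⁻¹ := by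
    intro τ hτ
    have h1 : (fun s => f τ s)
        = Set.indicator (Set.Ioi τ) (fun s => Real.exp (ν * τ) * (w s)⁻¹) := by
      funext s
      by_cases h : τ < s
      · simp [hfdef, Set.indicator, Set.mem_Ioi, h, div_eq_mul_inv]
      · simp [hfdef, Set.indicator, Set.mem_Ioi, h]
    show (∫ s, f τ s ∂ρ) = _
    rw [h1, integral_indicator measurableSet_Ioi, hρ,
      Measure.restrict_restrict measurableSet_Ioi, Set.Ioi_inter_Iic, integral_const_mul]
  have hsliceInd : ∀ s : ℝ, s ≤ 0 → (fun τ => f τ s)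
      = Set.indicator (Set.Iio s) (fun τ => Real.exp (ν * τ) * (w s)⁻¹) := by
    intro s hs
    funext τ
    by_cases h : τ < s
    · simp [hfdef, Set.indicator, Set.mem_Iio, h, div_eq_mul_inv]
    · simp [hfdef, Set.indicator, Set.mem_Iio, h]
  have hsliceInt : ∀ s : ℝ, s ≤ 0 → Integrable (fun τ => f τ s) ρ := by
    intro s hs
    rw [hsliceInd s hs]
    exact ((exp_mul_integrableOn_Iic hν 0).mul_const (w s)⁻¹).indicator measurableSet_Iio
  have hsliceVal : ∀ s : ℝ, s ≤ 0 → ∫ τ, f τ s ∂ρ = Real.exp (ν * s) / ν * (w s)⁻¹ := by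
    intro s hs
    have hIio : Set.Iio s ∩ Set.Iic (0:ℝ) = Set.Iio s :=
      Set.inter_eq_left.2 fun x hx => le_trans (le_of_lt hx) hs
    rw [hsliceInd s hs, integral_indicator measurableSet_Iio, hρ,
      Measure.restrict_restrict measurableSet_Iio, hIio,
      integral_mul_const, ← integral_Iic_eq_integral_Iio, integral_exp_mul_Iic' hν s]
  have hfm : Measurable (Function.uncurry f) := by
    have h : Function.uncurry f
        = fun p : ℝ × ℝ => if p.1 < p.2 then Real.exp (ν * p.1) / w p.2 else 0 := rfl
    rw [h]
    exact Measurable.ite (measurableSet_lt measurable_fst measurable_snd)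
      ((Real.measurable_exp.comp (measurable_fst.const_mul ν)).div (hwm.comp measurable_snd))
      measurable_const
  have hfint : Integrable (Function.uncurry f) (ρ.prod ρ) := by
    refine (integrable_prod_iff' hfm.aestronglyMeasurable).2 ⟨?_, ?_⟩
    · filter_upwards [ae_restrict_mem measurableSet_Iic] with s hs
      exact hsliceInt s hs
    · have h₀ : Integrable (fun s => Real.exp (ν * s) / ν * (w s)⁻¹) ρ := by
        have h1 : Integrable (fun s => ν⁻¹ * (Real.exp (ν * s) / w s)) ρ :=
          hwint.const_mul ν⁻¹
        exact h1.congr (ae_of_all _ fun s => by ring)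
      refine h₀.congr ?_
      filter_upwards [ae_restrict_mem measurableSet_Iic] with s hs
      have hnorm : (fun τ => ‖f τ s‖) = fun τ => f τ s := by
        funext τ
        refine Real.norm_of_nonneg ?_
        by_cases h : τ < s
        · simp only [hfdef, if_pos h]
          exact div_nonneg (Real.exp_pos _).le (hw s hs).1.le
        · simp [hfdef, h]
      show Real.exp (ν * s) / ν * (w s)⁻¹ = ∫ τ, ‖f τ s‖ ∂ρ
      rw [hnorm, hsliceVal s hs]
  have hGint : Integrable G ρ := hfint.integral_prod_left
  have hIval : ∫ τ, G τ ∂ρ = I / ν := by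
    have hswap := integral_integral_swap hfint
    have h2 : ∫ s, (∫ τ, f τ s ∂ρ) ∂ρ
        = ∫ s in Set.Iic (0:ℝ), Real.exp (ν * s) / ν * (w s)⁻¹ := by
      refine setIntegral_congr_ae measurableSet_Iic ?_
      filter_upwards [] with s hs
      exact hsliceVal s hs
    have h3 : (fun s : ℝ => Real.exp (ν * s) / ν * (w s)⁻¹)
        = fun s => ν⁻¹ * (Real.exp (ν * s) / w s) := funext fun s => by ring
    calc ∫ τ, G τ ∂ρ = ∫ s, (∫ τ, f τ s ∂ρ) ∂ρ := hswap
      _ = ∫ s in Set.Iic (0:ℝ), Real.exp (ν * s) / ν * (w s)⁻¹ := h2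
      _ = ν⁻¹ * I := by rw [h3, integral_const_mul, ← hIdef]
      _ = I / ν := by ring
  -- pointwise comparison
  have hptwise : ∀ τ : ℝ, τ ≤ 0 →
      |Real.exp (∫ s in τ..0, A (V s)) - Real.exp (∫ s in τ..0, A (V' s))| * k01 (V τ)
        ≤ (g₀ * g₂ * M) * G τ := by
    intro τ hτ
    have hXle : (∫ s in τ..0, A (V s)) ≤ ν * τ := by
      have h1 : (∫ s in τ..0, A (V s)) ≤ ∫ s in τ..0, (-ν : ℝ) :=
        intervalIntegral.integral_mono_on hτ (hIntAV V hVm hV τ hτ)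
          intervalIntegrable_const (fun s hs => hAν _ (hV s hs.2))
      have h2 : (∫ s in τ..0, (-ν : ℝ)) = ν * τ := by
        simp [intervalIntegral.integral_const]
        ring
      linarith
    have hYle : (∫ s in τ..0, A (V' s)) ≤ ν * τ := by
      have h1 : (∫ s in τ..0, A (V' s)) ≤ ∫ s in τ..0, (-ν : ℝ) :=
        intervalIntegral.integral_mono_on hτ (hIntAV V' hV'm hV' τ hτ)
          intervalIntegrable_const (fun s hs => hAν _ (hV' s hs.2))
      have h2 : (∫ s in τ..0, (-ν : ℝ)) = ν * τ := by
        simp [intervalIntegral.integral_const]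
        ring
      linarith
    have hXY : |(∫ s in τ..0, A (V s)) - ∫ s in τ..0, A (V' s)|
        ≤ g₂ * (M * ∫ s in Set.Ioc τ 0, (w s)⁻¹) := by
      have hsubint : (∫ s in τ..0, A (V s)) - (∫ s in τ..0, A (V' s))
          = ∫ s in τ..0, (A (V s) - A (V' s)) :=
        (intervalIntegral.integral_sub (hIntAV V hVm hV τ hτ) (hIntAV V' hV'm hV' τ hτ)).symm
      rw [hsubint]
      refine le_trans (intervalIntegral.abs_integral_le_integral_abs hτ) ?_
      rw [intervalIntegral.integral_of_le hτ]
      have hle : (∫ s in Set.Ioc τ 0, |A (V s) - A (V' s)|)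
          ≤ ∫ s in Set.Ioc τ 0, g₂ * (M / w s) := by
        refine integral_mono_of_nonneg (ae_of_all _ fun s => abs_nonneg _) (hinv τ hτ) ?_
        filter_upwards [ae_restrict_of_ae hVb, ae_restrict_mem measurableSet_Ioc] with s h1 h2
        have hs0 : s ≤ 0 := h2.2
        calc |A (V s) - A (V' s)| ≤ g₂ * |V s - V' s| :=
              hALip (V s) (V' s) (hV s hs0) (hV' s hs0)
          _ ≤ g₂ * (M / w s) := mul_le_mul_of_nonneg_left (h1 hs0) hg₂n
      refine le_trans hle (le_of_eq ?_)
      rw [show (fun s => g₂ * (M / w s)) = fun s => (g₂ * M) * (w s)⁻¹ from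
        funext fun s => by ring, integral_const_mul]
      ring
    have h1 : |Real.exp (∫ s in τ..0, A (V s)) - Real.exp (∫ s in τ..0, A (V' s))|
        ≤ Real.exp (ν * τ) * |(∫ s in τ..0, A (V s)) - ∫ s in τ..0, A (V' s)| :=
      abs_exp_sub_exp_le' hXle hYle
    have hk : k01 (V τ) ≤ g₀ := hg₀b _ (hV τ hτ)
    have hWn : 0 ≤ ∫ s in Set.Ioc τ 0, (w s)⁻¹ :=
      setIntegral_nonneg measurableSet_Ioc (fun s hs => inv_nonneg.2 (hw s hs.2).1.le)
    calc |Real.exp (∫ s in τ..0, A (V s)) - Real.exp (∫ s in τ..0, A (V' s))| * k01 (V τ)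
        ≤ (Real.exp (ν * τ) * (g₂ * (M * ∫ s in Set.Ioc τ 0, (w s)⁻¹))) * g₀ := by
          refine mul_le_mul (le_trans h1 ?_) hk (hk01n _) ?_
          · exact mul_le_mul_of_nonneg_left hXY (Real.exp_pos _).le
          · exact mul_nonneg (Real.exp_pos _).le
              (mul_nonneg hg₂n (mul_nonneg hMn hWn))
      _ = (g₀ * g₂ * M) * (Real.exp (ν * τ) * ∫ s in Set.Ioc τ 0, (w s)⁻¹) := by ring
      _ = (g₀ * g₂ * M) * G τ := by rw [hGval τ hτ]
  -- conclusion
  have hae : (fun τ => |Real.exp (∫ s in τ..0, A (V s)) - Real.exp (∫ s in τ..0, A (V' s))| *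
      k01 (V τ)) ≤ᵐ[ρ] fun τ => (g₀ * g₂ * M) * G τ := by
    filter_upwards [ae_restrict_mem measurableSet_Iic] with τ hτ
    exact hptwise τ hτ
  have h0 : (0 : ℝ → ℝ) ≤ᵐ[ρ] fun τ =>
      |Real.exp (∫ s in τ..0, A (V s)) - Real.exp (∫ s in τ..0, A (V' s))| * k01 (V τ) :=
    ae_of_all _ fun τ => mul_nonneg (abs_nonneg _) (hk01n _)
  calc (∫ τ in Set.Iic (0:ℝ),
        |Real.exp (∫ s in τ..0, A (V s)) - Real.exp (∫ s in τ..0, A (V' s))| * k01 (V τ))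
      ≤ ∫ τ, (g₀ * g₂ * M) * G τ ∂ρ :=
        integral_mono_of_nonneg h0 (hGint.const_mul _) hae
    _ = (g₀ * g₂ * M) * (I / ν) := by rw [integral_const_mul, hIval]
    _ = (g₀ * g₂ / ν) * I * M := by ring
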